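/- arXiv:math/0604098 — 2 statements merged into one kernel-verified Lean document; each statement's English description precedes it below -/
import Mathlib

section
/- Let G : ℝ × ℝ → ℝ be continuously differentiable and 2π-periodic in its second variable, let ω, A₀, t₀ ∈ ℝ and T > 0. Define M(t₀) = (1/T) ∫₀ᵀ G(ω t, t + t₀) dt (where G(α, s) denotes the function evaluated at angle α and time s, and the integrand is T-periodic in t). Then ω · (1/T) ∫₀ᵀ ∂₁G(ω t, t + t₀) dt = − M'(t₀), where ∂₁G denotes the partial derivative of G with respect to its first argument, provided the map t ↦ G(ω t, t + t₀) is T-periodic. -/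
open MeasureTheory intervalIntegral Metric

theorem stmt_1 (G : ℝ × ℝ → ℝ) (hG : ContDiff ℝ 1 G)
    (hper2 : ∀ a s, G (a, s + 2 * Real.pi) = G (a, s))
    (ω A₀ t₀ T : ℝ) (hT : 0 < T)
    (hper : ∀ s t : ℝ, G (ω * (t + T), (t + T) + s) = G (ω * t, t + s))
    (M : ℝ → ℝ) (hM : ∀ s, M s = (1 / T) * ∫ t in (0:ℝ)..T, G (ω * t, t + s)) :
    ω * ((1 / T) * ∫ t in (0:ℝ)..T, deriv (fun a => G (a, t + t₀)) (ω * t))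
      = - deriv M t₀ := by
  set L : ℝ × ℝ → ℝ × ℝ →L[ℝ] ℝ := fderiv ℝ G with hL
  have hGd : Differentiable ℝ G := hG.differentiable one_ne_zero
  have hLc : Continuous L := hG.continuous_fderiv one_ne_zero
  have hFd : ∀ p : ℝ × ℝ, HasFDerivAt G (L p) p := fun p => (hGd p).hasFDerivAt
  -- partial derivative in the first variable
  have h1 : ∀ (x s : ℝ), HasDerivAt (fun a => G (a, s)) (L (x, s) (1, 0)) x := by
    intro x s
    have hu : HasDerivAt (fun a : ℝ => (a, s)) ((1 : ℝ), (0 : ℝ)) x :=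
      (hasDerivAt_id x).prodMk (hasDerivAt_const x s)
    exact (hFd (x, s)).comp_hasDerivAt x hu
  -- derivative wrt the parameter s
  have h2 : ∀ (t s : ℝ), HasDerivAt (fun s => G (ω * t, t + s)) (L (ω * t, t + s) (0, 1)) s := by
    intro t s
    have hu : HasDerivAt (fun s : ℝ => (ω * t, t + s)) ((0 : ℝ), (1 : ℝ)) s :=
      (hasDerivAt_const s (ω * t)).prodMk ((hasDerivAt_id' s).const_add t)
    exact (hFd (ω * t, t + s)).comp_hasDerivAt s hu
  -- derivative along the flow
  have h3 : ∀ t : ℝ, HasDerivAt (fun t => G (ω * t, t + t₀)) (L (ω * t, t + t₀) (ω, 1)) t := by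
    intro t
    have hu : HasDerivAt (fun t : ℝ => (ω * t, t + t₀)) ((ω : ℝ), (1 : ℝ)) t := by
      have : HasDerivAt (fun t : ℝ => ω * t) ω t := by
        simpa using (hasDerivAt_id t).const_mul ω
      exact this.prodMk ((hasDerivAt_id' t).add_const t₀)
    exact (hFd (ω * t, t + t₀)).comp_hasDerivAt t hu
  -- continuity of the curve and of evaluations of L along it
  have hcurve : ∀ s : ℝ, Continuous (fun t : ℝ => L (ω * t, t + s)) := by
    intro s
    exact hLc.comp (by fun_prop)
  have hcont : ∀ (s : ℝ) (v : ℝ × ℝ), Continuous (fun t : ℝ => L (ω * t, t + s) v) := by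
    intro s v
    exact (ContinuousLinearMap.apply ℝ ℝ v).continuous.comp (hcurve s)
  -- FTC : integral of the total derivative vanishes
  have hFTC : ∫ t in (0:ℝ)..T, L (ω * t, t + t₀) (ω, 1) = 0 := by
    rw [intervalIntegral.integral_eq_sub_of_hasDerivAt (fun t _ => h3 t)
      ((hcont t₀ (ω, 1)).intervalIntegrable 0 T)]
    have := hper t₀ 0
    simp only [zero_add] at this
    rw [this]
    simp
  -- split the total derivative
  have hsplit : ∀ t : ℝ, L (ω * t, t + t₀) (ω, 1)
      = ω * L (ω * t, t + t₀) (1, 0) + L (ω * t, t + t₀) (0, 1) := by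
    intro t
    have : ((ω : ℝ), (1 : ℝ)) = ω • ((1 : ℝ), (0 : ℝ)) + ((0 : ℝ), (1 : ℝ)) := by
      simp [Prod.ext_iff]
    rw [this, map_add, ContinuousLinearMap.map_smul, smul_eq_mul]
  have hkey : ω * ∫ t in (0:ℝ)..T, L (ω * t, t + t₀) (1, 0)
      = - ∫ t in (0:ℝ)..T, L (ω * t, t + t₀) (0, 1) := by
    have hi1 : IntervalIntegrable (fun t => L (ω * t, t + t₀) (1, 0)) volume 0 T :=
      (hcont t₀ (1, 0)).intervalIntegrable (0:ℝ) T
    have hi2 : IntervalIntegrable (fun t => L (ω * t, t + t₀) (0, 1)) volume 0 T :=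
      (hcont t₀ (0, 1)).intervalIntegrable (0:ℝ) T
    have : ∫ t in (0:ℝ)..T, (ω * L (ω * t, t + t₀) (1, 0) + L (ω * t, t + t₀) (0, 1))
        = 0 :=
      (intervalIntegral.integral_congr fun t _ => (hsplit t).symm).trans hFTC
    rw [intervalIntegral.integral_add (hi1.const_mul ω) hi2,
      intervalIntegral.integral_const_mul] at this
    linarith
  -- differentiation under the integral sign
  have hbound : ∃ C : ℝ, ∀ t ∈ Set.uIcc (0:ℝ) T, ∀ x ∈ closedBall t₀ 1,
      ‖L (ω * t, t + x) (0, 1)‖ ≤ C := by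
    have hK : IsCompact (Set.uIcc (0:ℝ) T ×ˢ closedBall t₀ 1) :=
      isCompact_uIcc.prod (isCompact_closedBall _ _)
    have hc : Continuous (fun p : ℝ × ℝ => L (ω * p.1, p.1 + p.2) (0, 1)) :=
      (ContinuousLinearMap.apply ℝ ℝ ((0:ℝ), (1:ℝ))).continuous.comp
        (hLc.comp (by fun_prop))
    obtain ⟨C, hC⟩ := hK.exists_bound_of_continuousOn hc.continuousOn
    exact ⟨C, fun t ht x hx => hC (t, x) ⟨ht, hx⟩⟩
  obtain ⟨C, hC⟩ := hbound
  have hMder : HasDerivAt (fun s => ∫ t in (0:ℝ)..T, G (ω * t, t + s))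
      (∫ t in (0:ℝ)..T, L (ω * t, t + t₀) (0, 1)) t₀ := by
    refine (intervalIntegral.hasDerivAt_integral_of_dominated_loc_of_deriv_le
      (F := fun s t => G (ω * t, t + s)) (F' := fun s t => L (ω * t, t + s) (0, 1))
      (bound := fun _ => C) (ball_mem_nhds t₀ one_pos) ?_ ?_ ?_ ?_ ?_ ?_).2
    · filter_upwards with x
      exact (hG.continuous.comp (by fun_prop)).aestronglyMeasurable
    · exact (hG.continuous.comp (by fun_prop) : Continuous fun t =>
        G (ω * t, t + t₀)).intervalIntegrable 0 T
    · exact (hcont t₀ (0, 1)).aestronglyMeasurable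
    · filter_upwards with t ht x hx
      exact hC t (Set.uIoc_subset_uIcc ht) x (ball_subset_closedBall hx)
    · exact intervalIntegrable_const
    · filter_upwards with t ht x hx
      exact h2 t x
  have hM' : deriv M t₀ = (1 / T) * ∫ t in (0:ℝ)..T, L (ω * t, t + t₀) (0, 1) := by
    have : M = fun s => (1 / T) * ∫ t in (0:ℝ)..T, G (ω * t, t + s) := funext hM
    rw [this]
    exact (hMder.const_mul (1 / T)).deriv
  have hInt1 : (∫ t in (0:ℝ)..T, deriv (fun a => G (a, t + t₀)) (ω * t))
      = ∫ t in (0:ℝ)..T, L (ω * t, t + t₀) (1, 0) :=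
    intervalIntegral.integral_congr fun t _ => (h1 (ω * t) (t + t₀)).deriv
  rw [hInt1, hM']
  have h4 : ω * ((1 / T) * ∫ t in (0:ℝ)..T, L (ω * t, t + t₀) (1, 0))
      = (1 / T) * (ω * ∫ t in (0:ℝ)..T, L (ω * t, t + t₀) (1, 0)) := by ring
  rw [h4, hkey]
  ring
end

section
/- Let T > 0 be an integer multiple of 2π (say T = 2πq for a positive integer q). Let x₀, y₀ : ℝ → ℝ be continuous T-periodic functions with y₀ = ẋ₀ and x₀ continuously differentiable, and suppose ∫₀ᵀ y₀(t)² dt > 0. Let f : ℝ × ℝ → ℝ be continuous and 2π-periodic in its second argument. Define C₀(t₀) = (∫₀ᵀ y₀(t) f(x₀(t), t + t₀) dt) / (∫₀ᵀ y₀(t)² dt). Then ∫₀^{2π} C₀(t₀) dt₀ = 0, i.e., the function C₀ has zero mean over [0, 2π]. -/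
open MeasureTheory intervalIntegral Set Function

theorem stmt_3 (q : ℕ) (hq : 0 < q) (T : ℝ) (hT : T = 2 * Real.pi * q)
    (x₀ y₀ : ℝ → ℝ) (hx : ∀ t, HasDerivAt x₀ (y₀ t) t) (hy : Continuous y₀)
    (hxp : ∀ t, x₀ (t + T) = x₀ t) (hyp : ∀ t, y₀ (t + T) = y₀ t)
    (hpos : 0 < ∫ t in (0:ℝ)..T, (y₀ t) ^ 2)
    (f : ℝ × ℝ → ℝ) (hf : Continuous f)
    (hf2 : ∀ x s, f (x, s + 2 * Real.pi) = f (x, s))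
    (C₀ : ℝ → ℝ)
    (hC : ∀ t₀, C₀ t₀ = (∫ t in (0:ℝ)..T, y₀ t * f (x₀ t, t + t₀)) /
      (∫ t in (0:ℝ)..T, (y₀ t) ^ 2)) :
    ∫ t₀ in (0:ℝ)..(2 * Real.pi), C₀ t₀ = 0 := by
  have hcx : Continuous x₀ := continuous_iff_continuousAt.mpr fun t => (hx t).continuousAt
  have h2pi : (0:ℝ) ≤ 2 * Real.pi := by positivity
  have hTpos : (0:ℝ) ≤ T := by
    rw [hT]; positivity
  simp only [hC]
  rw [intervalIntegral.integral_div]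
  suffices h : (∫ t₀ in (0:ℝ)..(2 * Real.pi), ∫ t in (0:ℝ)..T, y₀ t * f (x₀ t, t + t₀)) = 0 by
    rw [h, zero_div]
  -- the continuous integrand on the product space
  have hg : Continuous (fun p : ℝ × ℝ => y₀ p.2 * f (x₀ p.2, p.2 + p.1)) := by
    exact (hy.comp continuous_snd).mul
      (hf.comp ((hcx.comp continuous_snd).prodMk (continuous_snd.add continuous_fst)))
  -- Fubini
  have swap : (∫ t₀ in (0:ℝ)..(2 * Real.pi), ∫ t in (0:ℝ)..T, y₀ t * f (x₀ t, t + t₀))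
      = ∫ t in (0:ℝ)..T, ∫ t₀ in (0:ℝ)..(2 * Real.pi), y₀ t * f (x₀ t, t + t₀) := by
    simp only [intervalIntegral.integral_of_le h2pi, intervalIntegral.integral_of_le hTpos]
    apply MeasureTheory.integral_integral_swap
    rw [Function.uncurry_def]
    have : IntegrableOn (fun p : ℝ × ℝ => y₀ p.2 * f (x₀ p.2, p.2 + p.1))
        ((Ioc (0:ℝ) (2 * Real.pi)) ×ˢ (Ioc (0:ℝ) T)) (volume.prod volume) :=
      (hg.continuousOn.integrableOn_compact (isCompact_Icc.prod isCompact_Icc)).mono_set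
        (Set.prod_mono Ioc_subset_Icc_self Ioc_subset_Icc_self)
    rwa [IntegrableOn, ← Measure.prod_restrict] at this
  rw [swap]
  -- compute the inner integral via periodicity
  set F : ℝ → ℝ := fun x => ∫ s in (0:ℝ)..(2 * Real.pi), f (x, s) with hF
  have hinner : ∀ t, (∫ t₀ in (0:ℝ)..(2 * Real.pi), y₀ t * f (x₀ t, t + t₀)) = y₀ t * F (x₀ t) := by
    intro t
    rw [intervalIntegral.integral_const_mul]
    congr 1
    have := intervalIntegral.integral_comp_add_left (fun s => f (x₀ t, s)) t
      (a := 0) (b := 2 * Real.pi)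
    rw [this, add_zero]
    have hper : Periodic (fun s => f (x₀ t, s)) (2 * Real.pi) := fun s => hf2 _ s
    simpa using hper.intervalIntegral_add_eq t 0
  simp only [hinner]
  -- F is continuous
  have hFc : Continuous F := by
    apply continuous_parametric_intervalIntegral_of_continuous' (μ := volume)
      (f := fun x s => f (x, s))
    exact hf.comp (continuous_fst.prodMk continuous_snd)
  -- antiderivative of F
  set G : ℝ → ℝ := fun x => ∫ u in (0:ℝ)..x, F u with hG
  have hG' : ∀ x, HasDerivAt G (F x) x := fun x =>
    (hFc.integral_hasStrictDerivAt 0 x).hasDerivAt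
  have hcomp : ∀ t, HasDerivAt (fun t => G (x₀ t)) (y₀ t * F (x₀ t)) t := by
    intro t
    have := (hG' (x₀ t)).comp t (hx t)
    simpa [mul_comm, Function.comp_def] using this
  have key : (∫ t in (0:ℝ)..T, y₀ t * F (x₀ t)) = G (x₀ T) - G (x₀ 0) :=
    intervalIntegral.integral_eq_sub_of_hasDerivAt (fun t _ => hcomp t)
      ((hy.mul (hFc.comp hcx)).intervalIntegrable _ _)
  have hx0 : x₀ T = x₀ 0 := by simpa using hxp 0
  rw [key, hx0, sub_self]
end
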